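/- (One-step Riccati preservation of nonnegativity, key step of Theorem 2) Let H, U be real Hilbert spaces, A, C ∈ L(H), B, D ∈ L(U,H), M ∈ L(H) and R ∈ L(U) self-adjoint with R positive, L ∈ L(H,U), and suppose the block operator Ψ = [[M, L*],[L, R]] on H × U is nonnegative. If P ∈ L(H) is self-adjoint and nonnegative, then ℛ := R + B*PB + D*PD is positive (hence boundedly invertible), and the Riccati update Π(P) := A*PA + C*PC + M − (L* + A*PB + C*PD) ℛ⁻¹ (L + B*PA + D*PC) is a nonnegative self-adjoint operator on H. -/
import Mathlib


open scoped RealInnerProductSpace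
open ContinuousLinearMap

set_option maxHeartbeats 1000000 in
/-- One-step Riccati preservation of nonnegativity (key step of Theorem 2): if `R` is
positive, the block operator `Ψ = [[M, L*],[L, R]]` on `H × U` is nonnegative (expressed
via its quadratic form `⟪Mx,x⟫ + 2⟪Lx,u⟫ + ⟪Ru,u⟫`), and `P ≥ 0` is self-adjoint, then
`ℛ = R + B*PB + D*PD` is positive (hence boundedly invertible), and the Riccati update
`Π(P) = A*PA + C*PC + M − (L* + A*PB + C*PD)ℛ⁻¹(L + B*PA + D*PC)` is a nonnegative
self-adjoint operator on `H`. -/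
theorem stmt_8 {H U : Type*} [NormedAddCommGroup H] [InnerProductSpace ℝ H] [CompleteSpace H]
    [NormedAddCommGroup U] [InnerProductSpace ℝ U] [CompleteSpace U]
    (A C : H →L[ℝ] H) (B D : U →L[ℝ] H)
    (M : H →L[ℝ] H) (hM : IsSelfAdjoint M)
    (R : U →L[ℝ] U) (hR : IsSelfAdjoint R)
    (ϑ : ℝ) (hϑ : 0 < ϑ) (hRpos : ∀ u : U, ϑ * ‖u‖ ^ 2 ≤ ⟪R u, u⟫)
    (L : H →L[ℝ] U)
    (hΨ : ∀ (x : H) (u : U), 0 ≤ ⟪M x, x⟫ + 2 * ⟪L x, u⟫ + ⟪R u, u⟫)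
    (P : H →L[ℝ] H) (hPsa : IsSelfAdjoint P) (hP : ∀ x : H, 0 ≤ ⟪P x, x⟫) :
    (∃ ε : ℝ, 0 < ε ∧ ∀ u : U,
        ε * ‖u‖ ^ 2 ≤ ⟪(R + adjoint B ∘L P ∘L B + adjoint D ∘L P ∘L D) u, u⟫) ∧
    (∃ Rinv : U →L[ℝ] U,
        (R + adjoint B ∘L P ∘L B + adjoint D ∘L P ∘L D) ∘L Rinv =
          ContinuousLinearMap.id ℝ U ∧
        Rinv ∘L (R + adjoint B ∘L P ∘L B + adjoint D ∘L P ∘L D) =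
          ContinuousLinearMap.id ℝ U) ∧
    (∀ Rinv : U →L[ℝ] U,
      (R + adjoint B ∘L P ∘L B + adjoint D ∘L P ∘L D) ∘L Rinv =
          ContinuousLinearMap.id ℝ U →
      Rinv ∘L (R + adjoint B ∘L P ∘L B + adjoint D ∘L P ∘L D) =
          ContinuousLinearMap.id ℝ U →
      IsSelfAdjoint
        (adjoint A ∘L P ∘L A + adjoint C ∘L P ∘L C + M
          - (adjoint L + adjoint A ∘L P ∘L B + adjoint C ∘L P ∘L D) ∘L Rinv
              ∘L (L + adjoint B ∘L P ∘L A + adjoint D ∘L P ∘L C)) ∧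
      ∀ x : H,
        0 ≤ ⟪(adjoint A ∘L P ∘L A + adjoint C ∘L P ∘L C + M
          - (adjoint L + adjoint A ∘L P ∘L B + adjoint C ∘L P ∘L D) ∘L Rinv
              ∘L (L + adjoint B ∘L P ∘L A + adjoint D ∘L P ∘L C)) x, x⟫) := by
  set 𝓡 : U →L[ℝ] U := R + adjoint B ∘L P ∘L B + adjoint D ∘L P ∘L D with h𝓡
  have hPsym : ∀ (v : H) (w : H), ⟪P v, w⟫ = ⟪v, P w⟫ := by
    intro v w
    conv_lhs => rw [← hPsa.adjoint_eq]
    rw [adjoint_inner_left]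
  have hquad : ∀ u : U, ⟪𝓡 u, u⟫ = ⟪R u, u⟫ + ⟪P (B u), B u⟫ + ⟪P (D u), D u⟫ := by
    intro u
    simp [h𝓡, inner_add_left, adjoint_inner_left]
  have hcoer : ∀ u : U, ϑ * ‖u‖ ^ 2 ≤ ⟪𝓡 u, u⟫ := by
    intro u
    rw [hquad]
    have := hRpos u; have := hP (B u); have := hP (D u); linarith
  refine ⟨⟨ϑ, hϑ, hcoer⟩, ?_, ?_⟩
  · -- invertibility via Lax-Milgram
    have hb : IsCoercive ((innerSL ℝ).comp 𝓡) := by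
      refine ⟨ϑ, hϑ, fun u => ?_⟩
      have := hcoer u
      simpa [sq, mul_assoc] using this
    set E := hb.continuousLinearEquivOfBilin with hE
    have hEeq : ∀ v : U, E v = 𝓡 v := by
      intro v
      refine ext_inner_right ℝ fun w => ?_
      rw [hb.continuousLinearEquivOfBilin_apply]
      simp
    refine ⟨E.symm.toContinuousLinearMap, ?_, ?_⟩
    · ext u
      simp only [coe_comp', Function.comp_apply, ContinuousLinearEquiv.coe_coe, coe_id', id_eq]
      rw [← hEeq]
      exact E.apply_symm_apply u
    · ext u
      simp only [coe_comp', Function.comp_apply, ContinuousLinearEquiv.coe_coe, coe_id', id_eq]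
      rw [← hEeq]
      exact E.symm_apply_apply u
  · intro Rinv h1 h2
    set S : H →L[ℝ] U := L + adjoint B ∘L P ∘L A + adjoint D ∘L P ∘L C with hS
    have hSadj : adjoint L + adjoint A ∘L P ∘L B + adjoint C ∘L P ∘L D = adjoint S := by
      simp [hS, map_add, adjoint_comp, adjoint_adjoint, hPsa.adjoint_eq]
      abel
    have h𝓡app : ∀ u : U, 𝓡 (Rinv u) = u := by
      intro u
      have := congrArg (fun T : U →L[ℝ] U => T u) h1
      simpa using this
    have h𝓡sym : ∀ u v : U, ⟪𝓡 u, v⟫ = ⟪u, 𝓡 v⟫ := by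
      intro u v
      simp only [h𝓡, add_apply, comp_apply, inner_add_left, inner_add_right,
        adjoint_inner_left, adjoint_inner_right]
      have hRsym : ⟪R u, v⟫ = ⟪u, R v⟫ := hR.isSymmetric u v
      rw [hRsym, hPsym (B u) (B v), hPsym (D u) (D v)]
    have hRinv_sa : adjoint Rinv = Rinv := by
      symm
      rw [eq_adjoint_iff]
      intro u v
      calc ⟪Rinv u, v⟫ = ⟪Rinv u, 𝓡 (Rinv v)⟫ := by rw [h𝓡app]
        _ = ⟪𝓡 (Rinv u), Rinv v⟫ := (h𝓡sym _ _).symm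
        _ = ⟪u, Rinv v⟫ := by rw [h𝓡app]
    constructor
    · rw [isSelfAdjoint_iff']
      rw [hSadj]
      simp only [map_sub, map_add, adjoint_comp, adjoint_adjoint, hPsa.adjoint_eq,
        hM.adjoint_eq, hRinv_sa]
      simp only [comp_assoc]
    · intro x
      rw [hSadj]
      set y : U := Rinv (S x) with hy
      have hkey : 𝓡 y = S x := by
        have := congrArg (fun T : U →L[ℝ] U => T (S x)) h1
        simpa using this
      have key1 : ⟪R y, y⟫ + ⟪P (B y), B y⟫ + ⟪P (D y), D y⟫ = ⟪S x, y⟫ := by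
        rw [← hquad, hkey]
      have hSx : ⟪S x, y⟫ = ⟪L x, y⟫ + ⟪P (A x), B y⟫ + ⟪P (C x), D y⟫ := by
        simp [hS, inner_add_left, adjoint_inner_left]
      have e2 : ⟪P (A x + B (-y)), A x + B (-y)⟫
          = ⟪P (A x), A x⟫ - 2 * ⟪P (A x), B y⟫ + ⟪P (B y), B y⟫ := by
        have h' : ⟪P (B y), A x⟫ = ⟪P (A x), B y⟫ := by
          rw [hPsym, real_inner_comm]
        simp only [map_add, map_neg, inner_add_left, inner_add_right, inner_neg_left,
          inner_neg_right, neg_neg]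
        linarith
      have e3 : ⟪P (C x + D (-y)), C x + D (-y)⟫
          = ⟪P (C x), C x⟫ - 2 * ⟪P (C x), D y⟫ + ⟪P (D y), D y⟫ := by
        have h' : ⟪P (D y), C x⟫ = ⟪P (C x), D y⟫ := by
          rw [hPsym, real_inner_comm]
        simp only [map_add, map_neg, inner_add_left, inner_add_right, inner_neg_left,
          inner_neg_right, neg_neg]
        linarith
      have h0 := hΨ x (-y)
      have hPA := hP (A x + B (-y))
      have hPC := hP (C x + D (-y))
      rw [e2] at hPA
      rw [e3] at hPC
      rw [inner_neg_right, map_neg, inner_neg_neg] at h0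
      have expand : ⟪(adjoint A ∘L P ∘L A + adjoint C ∘L P ∘L C + M
          - adjoint S ∘L Rinv ∘L S) x, x⟫
          = ⟪P (A x), A x⟫ + ⟪P (C x), C x⟫ + ⟪M x, x⟫ - ⟪S x, y⟫ := by
        simp only [sub_apply, add_apply, comp_apply, inner_sub_left, inner_add_left,
          adjoint_inner_left, ← hy]
        rw [real_inner_comm (S x) y]
      rw [expand, hSx]
      linarith
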